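/- arXiv:0805.1916 — 3 statements merged into one kernel-verified Lean document; each statement's English description precedes it below -/
import Mathlib

section
/- The natural projection π_m from the analytification of affine m-space A^m — the space of multiplicative seminorms on the polynomial ring K[x_1, ..., x_m] compatible with ν, equipped with the coarsest topology making x ↦ |f|_x continuous for every polynomial f — to R̄^m given by x ↦ (−log|x_1|_x, ..., −log|x_m|_x) (with −log 0 = ∞) is a proper continuous map: the preimage of every compact subset of R̄^m is compact. -/
open scoped BigOperators Classical

noncomputable section

/-- The extended real line `R̄ = ℝ ∪ {∞}`. -/
abbrev Rbar : Type := WithTop ℝ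

/-- The map `a ↦ exp (−a)`, sending `∞` to `0`. -/
def expNeg (t : Rbar) : ℝ := if h : t = ⊤ then 0 else Real.exp (-(t.untop h))

/-- The topology on `R̄` in which `ℝ` carries its usual topology and the completed rays
`(a, ∞]` are a basis of neighborhoods of `∞`; equivalently, the topology induced by the
injection `expNeg : R̄ → ℝ`, which is a homeomorphism onto `[0, ∞)`. -/
instance : TopologicalSpace Rbar := TopologicalSpace.induced expNeg inferInstance

/-- `−log r`, with `−log 0 = ∞`. -/
def negLog (r : ℝ) : Rbar := if r = 0 then ⊤ else (((-Real.log r : ℝ)) : Rbar)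

/-- `ν : K → ℝ ∪ {∞}` is a (nonarchimedean) valuation: `ν(0) = ∞`,
`ν(ab) = ν(a) + ν(b)`, and `ν(a + b) ≥ min (ν a) (ν b)`. -/
structure IsVal {K : Type} [Field K] (ν : K → Rbar) : Prop where
  map_zero : ν 0 = ⊤
  map_mul : ∀ a b : K, ν (a * b) = ν a + ν b
  min_le_add : ∀ a b : K, min (ν a) (ν b) ≤ ν (a + b)

/-- The valuation `ν` is nontrivial: `ν(K*) ≠ {0}`. -/
def IsNontrivialVal {K : Type} [Field K] (ν : K → Rbar) : Prop :=
  ∃ a : K, a ≠ 0 ∧ ν a ≠ 0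

/-- The trivial valuation on a field `k`: `ν(a) = 0` for `a ≠ 0` and `ν(0) = ∞`. -/
def nuTriv (k : Type) [Field k] : k → Rbar := fun a => if a = 0 then ⊤ else 0

/-- `K` is complete with respect to the valuation `ν`, i.e. with respect to the induced
nonarchimedean absolute value `expNeg ∘ ν`: every Cauchy sequence converges. -/
def VComplete {K : Type} [Field K] (ν : K → Rbar) : Prop :=
  ∀ s : ℕ → K,
    (∀ ε : ℝ, 0 < ε → ∃ N : ℕ, ∀ p ≥ N, ∀ q ≥ N, expNeg (ν (s p - s q)) < ε) →
    ∃ L : K, ∀ ε : ℝ, 0 < ε → ∃ N : ℕ, ∀ p ≥ N, expNeg (ν (s p - L)) < ε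

/-- A multiplicative seminorm on a commutative ring `A`: a nonnegative real-valued
function with `|0| = 0`, `|1| = 1`, `|fg| = |f|·|g|` and `|f + g| ≤ |f| + |g|`. -/
structure IsMultSeminorm {A : Type} [CommRing A] (p : A → ℝ) : Prop where
  nonneg : ∀ f, 0 ≤ p f
  map_zero : p 0 = 0
  map_one : p 1 = 1
  map_mul : ∀ f g, p (f * g) = p f * p g
  add_le : ∀ f g, p (f + g) ≤ p f + p g

/-- A seminorm on the `K`-algebra `A` is compatible with `ν` if `|a| = exp(−ν(a))` for
every scalar `a ∈ K`. -/
def Compat {K A : Type} [Field K] [CommRing A] [Algebra K A] (ν : K → Rbar) (p : A → ℝ) :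
    Prop :=
  ∀ a : K, p (algebraMap K A a) = expNeg (ν a)

/-- The analytification `X^an` of the affine variety `X = Spec A` over the complete
nonarchimedean field `(K, ν)`: the set of multiplicative seminorms on `A` compatible with
`ν`, topologized (as a subset of `A → ℝ` with the product topology) by the coarsest
topology making `x ↦ |f|_x` continuous for every `f ∈ A`. -/
def Xan (K A : Type) [Field K] [CommRing A] [Algebra K A] (ν : K → Rbar) : Set (A → ℝ) :=
  {p | IsMultSeminorm p ∧ Compat ν p}

/-- The analytification `X^an` over a trivially valued field `k`: the set of
multiplicative seminorms on `A` that are equal to `1` on `k*`, with the topology of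
pointwise convergence. -/
def XanTriv (k A : Type) [Field k] [CommRing A] [Algebra k A] : Set (A → ℝ) :=
  {p | IsMultSeminorm p ∧ ∀ a : k, a ≠ 0 → p (algebraMap k A a) = 1}

/-- The projection `π_ι : X^an → R̄^m` attached to the affine embedding `ι` given by the
generators `f 0, ..., f (m-1)` of `A`: `x ↦ (−log|f 0|_x, ..., −log|f (m-1)|_x)`. -/
def piIota {K A : Type} [Field K] [CommRing A] [Algebra K A] (ν : K → Rbar) {m : ℕ}
    (f : Fin m → A) (x : ↥(Xan K A ν)) : Fin m → Rbar :=
  fun i => negLog (x.1 (f i))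

/-- The projection `π_ι : X^an → R̄^m` for a trivially valued base field. -/
def piIotaTriv {k A : Type} [Field k] [CommRing A] [Algebra k A] {m : ℕ}
    (f : Fin m → A) (x : ↥(XanTriv k A)) : Fin m → Rbar :=
  fun i => negLog (x.1 (f i))

/-- The tropicalization `Trop(X, ι)` of the affine embedding `ι : X ↪ A^m` of
`X = Spec A` given by the generators `f` of `A`: the closure in `R̄^m` of the set of
coordinatewise valuations of the `K`-points of `X`. -/
def TropX {K A : Type} [Field K] [CommRing A] [Algebra K A] (ν : K → Rbar) {m : ℕ}
    (f : Fin m → A) : Set (Fin m → Rbar) :=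
  closure {v | ∃ φ : A →ₐ[K] K, v = fun i => ν (φ (f i))}

/-- The tropicalization `Trop(φ) : R̄^m → R̄^n` of the equivariant morphism
`φ : A^m → A^n` whose coordinates are `y_j ↦ c_j · x^{a_j}`, namely
`v ↦ (ν(c_1) + ⟨a_1, v⟩, ..., ν(c_n) + ⟨a_n, v⟩)`, with the conventions `ν(0) = ∞`,
`∞ + t = ∞`, `a_i · ∞ = ∞` for `a_i > 0`, and `0 · ∞ = 0`. -/
def tropMap {K : Type} [Field K] (ν : K → Rbar) {m n : ℕ} (c : Fin n → K)
    (a : Fin n → Fin m → ℕ) (v : Fin m → Rbar) : Fin n → Rbar :=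
  fun j => ν (c j) + ∑ i, (a j i) • v i

/-- The affine embeddings of `X = Spec A`: an embedding `ι : X ↪ A^m` is a tuple of
generators of `A` as a `K`-algebra. -/
def AffEmb (K A : Type) [Field K] [CommRing A] [Algebra K A] : Type :=
  Σ m : ℕ, {f : Fin m → A // Algebra.adjoin K (Set.range f) = ⊤}

/-- The map `X^an → Π_ι R̄^{m(ι)}`, `x ↦ (π_ι(x))_ι`, over all affine embeddings `ι`. -/
def bigMap (K A : Type) [Field K] [CommRing A] [Algebra K A] (ν : K → Rbar)
    (x : ↥(Xan K A ν)) : ∀ e : AffEmb K A, Fin e.1 → Rbar :=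
  fun e => piIota ν e.2.1 x

/-- The inverse limit `varprojlim Trop(X, ι)`, realized inside `Π_ι R̄^{m(ι)}`: families
`(y_ι)` with `y_ι ∈ Trop(X, ι)` for all `ι` and `y_ȷ = Trop(φ)(y_ι)` for every
equivariant morphism `φ : A^{m(ι)} → A^{m(ȷ)}` with `ȷ = φ ∘ ι`. -/
def limitSet (K A : Type) [Field K] [CommRing A] [Algebra K A] (ν : K → Rbar) :
    Set (∀ e : AffEmb K A, Fin e.1 → Rbar) :=
  {y | (∀ e : AffEmb K A, y e ∈ TropX ν e.2.1) ∧
    ∀ (e e' : AffEmb K A) (c : Fin e'.1 → K) (a : Fin e'.1 → Fin e.1 → ℕ),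
      (∀ j, e'.2.1 j = algebraMap K A (c j) * ∏ i, (e.2.1 i) ^ (a j i)) →
      y e' = tropMap ν c a (y e)}

/-- The ring of Laurent polynomials `K[x_1^{±1}, ..., x_m^{±1}]`, i.e. the group algebra
of `ℤ^m` over `K`. -/
abbrev Laur (K : Type) [Field K] (m : ℕ) : Type := AddMonoidAlgebra K (Fin m → ℤ)

/-- Evaluation of a Laurent polynomial at a point `y ∈ K^m` (meaningful when the
relevant coordinates of `y` are invertible). -/
def lEval {K : Type} [Field K] {m : ℕ} (y : Fin m → K) (g : Laur K m) : K :=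
  ∑ u ∈ g.coeff.support, g.coeff u * ∏ i, (y i) ^ (u i)

/-- The tropical minimum of the Laurent polynomial `f` at `v ∈ ℝ^m` is attained twice:
the minimum of `ν(a_u) + ⟨u, v⟩` over `u ∈ supp(f)` is achieved by at least two distinct
`u ∈ supp(f)`.  (Equivalently, the initial form of `f` at `v` is not a monomial.) -/
def MinTwice {K : Type} [Field K] {m : ℕ} (ν : K → Rbar) (f : Laur K m) (v : Fin m → ℝ) :
    Prop :=
  ∃ u ∈ f.coeff.support, ∃ u' ∈ f.coeff.support, u ≠ u' ∧
    ν (f.coeff u) + ((∑ i, (u i : ℝ) * v i : ℝ) : Rbar)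
      = ν (f.coeff u') + ((∑ i, (u' i : ℝ) * v i : ℝ) : Rbar) ∧
    ∀ w ∈ f.coeff.support,
      ν (f.coeff u) + ((∑ i, (u i : ℝ) * v i : ℝ) : Rbar)
        ≤ ν (f.coeff w) + ((∑ i, (w i : ℝ) * v i : ℝ) : Rbar)

/-- With the trivial valuation: the minimum of `⟨u, w⟩` over `supp g` is attained by at
least two distinct `u ∈ supp g`. -/
def MinTwiceTriv {k : Type} [Field k] {m : ℕ} (g : Laur k m) (w : Fin m → ℝ) : Prop :=
  ∃ u ∈ g.coeff.support, ∃ u' ∈ g.coeff.support, u ≠ u' ∧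
    (∑ i, (u i : ℝ) * w i) = (∑ i, (u' i : ℝ) * w i) ∧
    ∀ z ∈ g.coeff.support, (∑ i, (u i : ℝ) * w i) ≤ ∑ i, (z i : ℝ) * w i

/-- The tropicalization `T_trop(J)` of an ideal of Laurent polynomials: the set of
`v ∈ ℝ^m` such that for every nonzero `f ∈ J` the tropical minimum of `f` at `v` is
attained twice. -/
def Ttrop {K : Type} [Field K] {m : ℕ} (ν : K → Rbar) (J : Ideal (Laur K m)) :
    Set (Fin m → ℝ) :=
  {v | ∀ f ∈ J, f ≠ 0 → MinTwice ν f v}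

/-- The `K`-points of the closed subvariety of the torus `T^m` cut out by the ideal `I`:
points of `(K*)^m` at which every element of `I` vanishes. -/
def torusPoints {K : Type} [Field K] {m : ℕ} (I : Ideal (Laur K m)) :
    Set (Fin m → Kˣ) :=
  {y | ∀ f ∈ I, lEval (fun i => (y i : K)) f = 0}

/-- The real number `ν(a)` (with junk value `0` when `ν(a) = ∞`, i.e. when `a = 0`). -/
def vR {K : Type} [Field K] (ν : K → Rbar) (a : K) : ℝ := (ν a).untopD 0

/-- The set `{trop(y) : y ∈ X(K)} ⊆ ℝ^m` of coordinatewise valuations of the `K`-points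
of the closed subvariety of the torus cut out by `I`; `trop(X)` is its closure. -/
def tropImg {K : Type} [Field K] {m : ℕ} (ν : K → Rbar) (I : Ideal (Laur K m)) :
    Set (Fin m → ℝ) :=
  {w | ∃ y ∈ torusPoints I, w = fun i => vR ν ((y i : Kˣ) : K)}

/-- The `K`-points of the closed subvariety of `A^m` cut out by the ideal `J`. -/
def affPoints {K : Type} [Field K] {m : ℕ} (J : Ideal (MvPolynomial (Fin m) K)) :
    Set (Fin m → K) :=
  {y | ∀ f ∈ J, MvPolynomial.eval y f = 0}

/-- The extended tropicalization in `R̄^m` of a set of points of `A^m(K)`: the closure of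
the set of coordinatewise valuations. -/
def TropAff {K : Type} [Field K] {m : ℕ} (ν : K → Rbar) (S : Set (Fin m → K)) :
    Set (Fin m → Rbar) :=
  closure {v | ∃ y ∈ S, v = fun i => ν (y i)}

/-- The coefficientwise extension map
`k[x_1^{±1}, ..., x_m^{±1}] → K[x_1^{±1}, ..., x_m^{±1}]` along `algebraMap k K`. -/
def laurExt (k K : Type) [Field k] [Field K] [Algebra k K] (m : ℕ) :
    Laur k m →ₐ[k] Laur K m :=
  (AddMonoidAlgebra.lift k (Laur K m) (Fin m → ℤ)) (AddMonoidAlgebra.of K (Fin m → ℤ))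

/-- The `i`-th coordinate function `x_i` in the coordinate ring
`k[X] = k[x_1^{±1}, ..., x_m^{±1}] / I` of a closed subvariety of the torus. -/
def coordLaur {k : Type} [Field k] {m : ℕ} (I : Ideal (Laur k m)) (i : Fin m) :
    Laur k m ⧸ I :=
  Ideal.Quotient.mk I (AddMonoidAlgebra.single (Pi.single i (1 : ℤ)) (1 : k))

/-- The projection `π : X^an → ℝ^m`, `x ↦ (−log|x_1|_x, ..., −log|x_m|_x)`, for a closed
subvariety of the torus over a trivially valued field. -/
def piTorus {k : Type} [Field k] {m : ℕ} (I : Ideal (Laur k m))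
    (x : ↥(XanTriv k (Laur k m ⧸ I))) : Fin m → ℝ :=
  fun i => -Real.log (x.1 (coordLaur I i))

/-- `trop(X)` for a closed subvariety of the torus over a trivially valued field: the
set of `v ∈ ℝ^m` such that for every nonzero `f ∈ I` the minimum of `⟨u, v⟩` over
`supp f` is attained at least twice. -/
def tropTrivTorus {k : Type} [Field k] {m : ℕ} (I : Ideal (Laur k m)) :
    Set (Fin m → ℝ) :=
  {v | ∀ f ∈ I, f ≠ 0 → MinTwiceTriv f v}

/-- The vanishing ideal of `X ∩ T^{I₀}` for the affine embedding of `X = Spec A` given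
by generators `f`: Laurent polynomials in the variables `x_i`, `i ∈ I₀` (support
condition), vanishing at every `k`-point `y` of `X` with `y_i ≠ 0` iff `i ∈ I₀`. -/
def stratVanishing (k A : Type) [Field k] [CommRing A] [Algebra k A] {m : ℕ}
    (f : Fin m → A) (I0 : Finset (Fin m)) : Set (Laur k m) :=
  {g | (∀ u ∈ g.coeff.support, ∀ i, i ∉ I0 → u i = 0) ∧
    ∀ φ : A →ₐ[k] k, (∀ i, φ (f i) ≠ 0 ↔ i ∈ I0) → lEval (fun i => φ (f i)) g = 0}

/-- The extended tropicalization `Trop(X, ι) ⊆ R̄^m` over a trivially valued field: the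
union over `I₀ ⊆ {1, ..., m}` of the sets `trop(X ∩ T^{I₀})`, each embedded in the
stratum `ℝ^{I₀} = {v : v_i < ∞ iff i ∈ I₀}` (coordinates `∞` off `I₀`). -/
def TropStrat (k A : Type) [Field k] [CommRing A] [Algebra k A] {m : ℕ}
    (f : Fin m → A) : Set (Fin m → Rbar) :=
  {v | ∃ (I0 : Finset (Fin m)) (w : Fin m → ℝ),
        (v = fun i => if i ∈ I0 then ((w i : ℝ) : Rbar) else ⊤) ∧
        ∀ g ∈ stratVanishing k A f I0, g ≠ 0 → MinTwiceTriv g w}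

/-- The map `X^an → Π_ι R̄^{m(ι)}` over a trivially valued field. -/
def bigMapTriv (k A : Type) [Field k] [CommRing A] [Algebra k A]
    (x : ↥(XanTriv k A)) : ∀ e : AffEmb k A, Fin e.1 → Rbar :=
  fun e => piIotaTriv e.2.1 x

/-- The inverse limit `varprojlim Trop(X, ι)` over a trivially valued field, realized
inside `Π_ι R̄^{m(ι)}`. -/
def limitSetTriv (k A : Type) [Field k] [CommRing A] [Algebra k A] :
    Set (∀ e : AffEmb k A, Fin e.1 → Rbar) :=
  {y | (∀ e : AffEmb k A, y e ∈ TropStrat k A e.2.1) ∧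
    ∀ (e e' : AffEmb k A) (c : Fin e'.1 → k) (a : Fin e'.1 → Fin e.1 → ℕ),
      (∀ j, e'.2.1 j = algebraMap k A (c j) * ∏ i, (e.2.1 i) ^ (a j i)) →
      y e' = tropMap (nuTriv k) c a (y e)}


/-- The projection `π_m : (A^m)^an → R̄^m`, `x ↦ (−log|x_1|_x, ..., −log|x_m|_x)`. -/
def piAm (K : Type) [Field K] (ν : K → Rbar) (m : ℕ)
    (x : ↥(Xan K (MvPolynomial (Fin m) K) ν)) : Fin m → Rbar :=
  fun i => negLog (x.1 (MvPolynomial.X i))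


/-! ### Auxiliary lemmas for `stmt1` -/

lemma expNeg_nonneg (t : Rbar) : 0 ≤ expNeg t := by
  unfold expNeg
  split
  · exact le_refl 0
  · exact (Real.exp_pos _).le

lemma expNeg_injective : Function.Injective expNeg := by
  intro s t hst
  unfold expNeg at hst
  split at hst <;> split at hst
  · next h1 h2 => rw [h1, h2]
  · next h1 h2 => exact absurd hst.symm (ne_of_gt (Real.exp_pos _))
  · next h1 h2 => exact absurd hst (ne_of_gt (Real.exp_pos _))
  · next h1 h2 =>
      have h := neg_injective (Real.exp_injective hst)
      rw [← WithTop.coe_untop s h1, ← WithTop.coe_untop t h2, h]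

lemma expNeg_negLog (r : ℝ) : expNeg (negLog r) = |r| := by
  unfold negLog
  by_cases h : r = 0
  · simp [h, expNeg]
  · rw [if_neg h]
    unfold expNeg
    rw [dif_neg (WithTop.coe_ne_top)]
    simp only [WithTop.untop_coe, neg_neg]
    rw [← Real.log_abs, Real.exp_log (abs_pos.mpr h)]

lemma continuous_expNeg : Continuous expNeg := continuous_induced_dom

lemma continuous_negLog : Continuous negLog := by
  apply continuous_induced_rng.2
  have : expNeg ∘ negLog = fun r => |r| := funext expNeg_negLog
  rw [this]
  exact continuous_abs

instance : T2Space Rbar :=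
  Topology.IsEmbedding.t2Space ⟨⟨rfl⟩, expNeg_injective⟩

/-- A multiplicative seminorm, as a monoid hom. -/
def msHom {A : Type} [CommRing A] (p : A → ℝ) (hp : IsMultSeminorm p) : A →* ℝ :=
  { toFun := p, map_one' := hp.map_one, map_mul' := hp.map_mul }

lemma seminorm_sum_le {A : Type} [CommRing A] {p : A → ℝ} (hp : IsMultSeminorm p)
    {ι : Type*} (s : Finset ι) (g : ι → A) :
    p (∑ i ∈ s, g i) ≤ ∑ i ∈ s, p (g i) := by
  classical
  induction s using Finset.induction with
  | empty => simp [hp.map_zero]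
  | insert a s hni ih =>
      rw [Finset.sum_insert hni, Finset.sum_insert hni]
      exact (hp.add_le _ _).trans (by linarith)

lemma stmt1_aux {K : Type} [Field K] (ν : K → Rbar) {m : ℕ} {p : MvPolynomial (Fin m) K → ℝ}
    (hp : IsMultSeminorm p) (hc : Compat ν p) {B : ℝ} (hB0 : 0 ≤ B)
    (hx : ∀ i, p (MvPolynomial.X i) ≤ B) (f : MvPolynomial (Fin m) K) :
    p f ≤ ∑ u ∈ f.support, expNeg (ν (MvPolynomial.coeff u f)) * ∏ i, B ^ (u i) := by
  classical
  calc p f = p (∑ u ∈ f.support, MvPolynomial.monomial u (MvPolynomial.coeff u f)) := by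
        rw [← MvPolynomial.as_sum]
    _ ≤ ∑ u ∈ f.support, p (MvPolynomial.monomial u (MvPolynomial.coeff u f)) :=
        seminorm_sum_le hp _ _
    _ ≤ ∑ u ∈ f.support, expNeg (ν (MvPolynomial.coeff u f)) * ∏ i, B ^ (u i) := by
        apply Finset.sum_le_sum
        intro u _
        rw [MvPolynomial.monomial_eq]
        rw [hp.map_mul]
        have hC : p (MvPolynomial.C (MvPolynomial.coeff u f)) =
            expNeg (ν (MvPolynomial.coeff u f)) := hc _
        rw [hC]
        apply mul_le_mul_of_nonneg_left _ (expNeg_nonneg _)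
        have hprod : p (u.prod fun n e => MvPolynomial.X n ^ e)
            = ∏ i, p (MvPolynomial.X i) ^ (u i) := by
          have h1 : p (u.prod fun n e => MvPolynomial.X n ^ e)
              = u.prod fun n e => p (MvPolynomial.X n) ^ e := by
            rw [Finsupp.prod, Finsupp.prod]
            show msHom p hp _ = _
            rw [map_prod (msHom p hp)]
            exact Finset.prod_congr rfl fun i _ => map_pow (msHom p hp) _ _
          rw [h1, Finsupp.prod_pow]
        rw [hprod]
        apply Finset.prod_le_prod
        · intro i _; exact pow_nonneg (hp.nonneg _) _
        · intro i _; exact pow_le_pow_left₀ (hp.nonneg _) (hx i) _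

/-- Lemma 2.1.  The natural projection `π_m` from the analytification
of affine `m`-space to `R̄^m` is a proper continuous map: it is continuous and the
preimage of every compact subset of `R̄^m` is compact. -/
theorem stmt1 {K : Type} [Field K] [IsAlgClosed K]
    (ν : K → Rbar) (hν : IsVal ν) (hnt : IsNontrivialVal ν) (hcomp : VComplete ν)
    (m : ℕ) :
    Continuous (piAm K ν m) ∧
      ∀ C : Set (Fin m → Rbar), IsCompact C → IsCompact (piAm K ν m ⁻¹' C) := by
  classical
  have hcont : Continuous (piAm K ν m) := by
    apply continuous_pi
    intro i
    exact continuous_negLog.comp ((continuous_apply _).comp continuous_subtype_val)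
  refine ⟨hcont, ?_⟩
  intro C hC
  -- the set in the ambient product space
  set P := MvPolynomial (Fin m) K
  set S : Set (P → ℝ) :=
    {p | (IsMultSeminorm p ∧ Compat ν p) ∧ (fun i => negLog (p (MvPolynomial.X i))) ∈ C}
    with hS
  -- bound on coordinates
  obtain ⟨B, hB0, hB⟩ : ∃ B : ℝ, 0 ≤ B ∧ ∀ v ∈ C, ∀ i, expNeg (v i) ≤ B := by
    rcases C.eq_empty_or_nonempty with h | hne
    · exact ⟨0, le_refl 0, by simp [h]⟩
    · have hg : Continuous (fun v : Fin m → Rbar => ∑ i, expNeg (v i)) := by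
        apply continuous_finset_sum
        intro i _
        exact continuous_expNeg.comp (continuous_apply i)
      obtain ⟨v₀, hv₀, hmax⟩ := hC.exists_isMaxOn hne hg.continuousOn
      refine ⟨max (∑ i, expNeg (v₀ i)) 0, le_max_right _ _, ?_⟩
      intro v hv i
      calc expNeg (v i) ≤ ∑ j, expNeg (v j) :=
            Finset.single_le_sum (fun j _ => expNeg_nonneg _) (Finset.mem_univ i)
        _ ≤ ∑ j, expNeg (v₀ j) := hmax hv
        _ ≤ _ := le_max_left _ _
  set M : P → ℝ := fun f =>
    ∑ u ∈ f.support, expNeg (ν (MvPolynomial.coeff u f)) * ∏ i, B ^ (u i) with hM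
  -- S is compact
  have hScpt : IsCompact S := by
    have hsub : S ⊆ Set.pi Set.univ (fun f => Set.Icc 0 (M f)) := by
      rintro p ⟨⟨hp, hcp⟩, hpc⟩ f _
      refine ⟨hp.nonneg f, ?_⟩
      apply stmt1_aux ν hp hcp hB0 _ f
      intro i
      have h1 := hB _ hpc i
      rwa [expNeg_negLog, abs_of_nonneg (hp.nonneg _)] at h1
    have hclosed : IsClosed S := by
      have h0 : IsClosed {p : P → ℝ | ∀ f, 0 ≤ p f} := by
        have : {p : P → ℝ | ∀ f, 0 ≤ p f} = ⋂ f, {p | 0 ≤ p f} := by ext; simp [Set.mem_iInter]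
        rw [this]
        exact isClosed_iInter fun f => isClosed_le continuous_const (continuous_apply f)
      have h1 : IsClosed {p : P → ℝ | p 0 = 0} :=
        isClosed_eq (continuous_apply 0) continuous_const
      have h2 : IsClosed {p : P → ℝ | p 1 = 1} :=
        isClosed_eq (continuous_apply 1) continuous_const
      have h3 : IsClosed {p : P → ℝ | ∀ f g, p (f * g) = p f * p g} := by
        have : {p : P → ℝ | ∀ f g, p (f * g) = p f * p g}
            = ⋂ f, ⋂ g, {p | p (f * g) = p f * p g} := by ext; simp [Set.mem_iInter]
        rw [this]
        exact isClosed_iInter fun f => isClosed_iInter fun g =>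
          isClosed_eq (continuous_apply _) ((continuous_apply f).mul (continuous_apply g))
      have h4 : IsClosed {p : P → ℝ | ∀ f g, p (f + g) ≤ p f + p g} := by
        have : {p : P → ℝ | ∀ f g, p (f + g) ≤ p f + p g}
            = ⋂ f, ⋂ g, {p | p (f + g) ≤ p f + p g} := by ext; simp [Set.mem_iInter]
        rw [this]
        exact isClosed_iInter fun f => isClosed_iInter fun g =>
          isClosed_le (continuous_apply _) ((continuous_apply f).add (continuous_apply g))
      have h5 : IsClosed {p : P → ℝ | ∀ a : K, p (algebraMap K P a) = expNeg (ν a)} := by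
        have : {p : P → ℝ | ∀ a : K, p (algebraMap K P a) = expNeg (ν a)}
            = ⋂ a : K, {p | p (algebraMap K P a) = expNeg (ν a)} := by
          ext; simp [Set.mem_iInter]
        rw [this]
        exact isClosed_iInter fun a => isClosed_eq (continuous_apply _) continuous_const
      have h6 : IsClosed {p : P → ℝ | (fun i => negLog (p (MvPolynomial.X i))) ∈ C} := by
        have hπ : Continuous (fun p : P → ℝ => fun i => negLog (p (MvPolynomial.X i))) :=
          continuous_pi fun i => continuous_negLog.comp (continuous_apply _)
        exact IsClosed.preimage hπ hC.isClosed
      have hSeq : S = ({p : P → ℝ | ∀ f, 0 ≤ p f} ∩ {p | p 0 = 0} ∩ {p | p 1 = 1}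
          ∩ {p | ∀ f g, p (f * g) = p f * p g} ∩ {p | ∀ f g, p (f + g) ≤ p f + p g}
          ∩ {p | ∀ a : K, p (algebraMap K P a) = expNeg (ν a)})
          ∩ {p | (fun i => negLog (p (MvPolynomial.X i))) ∈ C} := by
        ext p
        constructor
        · rintro ⟨⟨hp, hcp⟩, hpc⟩
          exact ⟨⟨⟨⟨⟨⟨hp.nonneg, hp.map_zero⟩, hp.map_one⟩, hp.map_mul⟩, hp.add_le⟩, hcp⟩, hpc⟩
        · rintro ⟨⟨⟨⟨⟨⟨ha, hb⟩, hc'⟩, hd⟩, he⟩, hf⟩, hg⟩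
          exact ⟨⟨⟨ha, hb, hc', hd, he⟩, hf⟩, hg⟩
      rw [hSeq]
      exact (((((h0.inter h1).inter h2).inter h3).inter h4).inter h5).inter h6
    exact IsCompact.of_isClosed_subset
      (isCompact_univ_pi fun f => isCompact_Icc) hclosed hsub
  -- transfer back to the subtype
  have himg : Subtype.val '' (piAm K ν m ⁻¹' C) = S := by
    ext p
    constructor
    · rintro ⟨x, hx, rfl⟩
      exact ⟨x.2, hx⟩
    · rintro ⟨hp, hpc⟩
      exact ⟨⟨p, hp⟩, hpc, rfl⟩
  rw [Topology.IsEmbedding.subtypeVal.isCompact_iff, himg]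
  exact hScpt

end
end

section
/- Let k ⊆ K be algebraically closed fields with valuations ν_k on k and ν on K extending ν_k (neither field assumed complete, the valuations possibly trivial). Then for every nonzero Laurent polynomial f ∈ k[x_1^{±1}, ..., x_m^{±1}], the tropicalization of the hypersurface it defines over k is contained in the tropicalization of the hypersurface it defines over K: T_trop(f·k[x_1^{±1}, ..., x_m^{±1}]) ⊆ T_trop(f·K[x_1^{±1}, ..., x_m^{±1}]). -/
open scoped BigOperators Classical

noncomputable section

namespace Stmt13Aux

variable {K : Type} [Field K]

def tval {m : ℕ} (ν : K → Rbar) (v : Fin m → ℝ) (h : Laur K m) (u : Fin m → ℤ) : Rbar :=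
  ν (h.coeff u) + ((∑ i, (u i : ℝ) * v i : ℝ) : Rbar)

theorem minTwice_iff {m : ℕ} (ν : K → Rbar) (f : Laur K m) (v : Fin m → ℝ) :
    MinTwice ν f v ↔ ∃ u ∈ f.coeff.support, ∃ u' ∈ f.coeff.support, u ≠ u' ∧
      tval ν v f u = tval ν v f u' ∧ ∀ w ∈ f.coeff.support, tval ν v f u ≤ tval ν v f w :=
  Iff.rfl

theorem one_eq {ν : K → Rbar} (hν : IsVal ν) : ν 1 = 0 ∨ ν 1 = ⊤ := by
  have h := hν.map_mul 1 1
  rw [one_mul] at h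
  rcases eq_or_ne (ν 1) ⊤ with h1 | h1
  · exact Or.inr h1
  · left
    lift ν 1 to ℝ using h1 with r hr
    have h2 : r = r + r := by exact_mod_cast h
    have : r = 0 := by linarith
    exact_mod_cast this

theorem all_top {ν : K → Rbar} (hν : IsVal ν) (h1 : ν 1 = ⊤) (a : K) : ν a = ⊤ := by
  have h := hν.map_mul a 1
  rw [mul_one] at h
  rw [h, h1, add_top]

theorem ne_top {ν : K → Rbar} (hν : IsVal ν) (h1 : ν 1 = 0) {a : K} (ha : a ≠ 0) :
    ν a ≠ ⊤ := by
  intro hT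
  have h := hν.map_mul a a⁻¹
  rw [mul_inv_cancel₀ ha, h1, hT, top_add] at h
  exact (WithTop.zero_ne_top) h

theorem sum_le_val {ν : K → Rbar} (hν : IsVal ν) {α : Type*} {s : Finset α} {f : α → K}
    {c : Rbar} : (∀ x ∈ s, c ≤ ν (f x)) → c ≤ ν (∑ x ∈ s, f x) := by
  classical
  induction s using Finset.cons_induction with
  | empty => intro _; simp [hν.map_zero]
  | cons a s ha ih =>
    intro h
    rw [Finset.sum_cons]
    refine le_trans ?_ (hν.min_le_add _ _)
    exact le_min (h a (Finset.mem_cons_self a s))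
      (ih fun x hx => h x (Finset.mem_cons.mpr (Or.inr hx)))

theorem sum_lt_val {ν : K → Rbar} (hν : IsVal ν) {α : Type*} {s : Finset α} {f : α → K}
    {c : Rbar} (hc : c ≠ ⊤) : (∀ x ∈ s, c < ν (f x)) → c < ν (∑ x ∈ s, f x) := by
  classical
  induction s using Finset.cons_induction with
  | empty => intro _; rw [Finset.sum_empty, hν.map_zero]; exact lt_top_iff_ne_top.mpr hc
  | cons a s ha ih =>
    intro h
    rw [Finset.sum_cons]
    refine lt_of_lt_of_le ?_ (hν.min_le_add _ _)
    exact lt_min (h a (Finset.mem_cons_self a s))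
      (ih fun x hx => h x (Finset.mem_cons.mpr (Or.inr hx)))

theorem val_neg {ν : K → Rbar} (hν : IsVal ν) (h1 : ν 1 = 0) (a : K) : ν (-a) = ν a := by
  have hm : ν (-1 : K) = 0 := by
    have h := hν.map_mul (-1 : K) (-1 : K)
    rw [neg_mul_neg, one_mul, h1] at h
    rcases eq_or_ne (ν (-1 : K)) ⊤ with ht | ht
    · rw [ht, top_add] at h; simp at h
    · lift ν (-1 : K) to ℝ using ht with r hr
      have h2 : (0 : ℝ) = r + r := by exact_mod_cast h
      have : r = 0 := by linarith
      exact_mod_cast this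
  calc ν (-a) = ν ((-1) * a) := by rw [neg_one_mul]
    _ = ν (-1 : K) + ν a := hν.map_mul _ _
    _ = ν a := by rw [hm, zero_add]

theorem val_add_eq_left {ν : K → Rbar} (hν : IsVal ν) (h1 : ν 1 = 0) {x y : K}
    (h : ν x < ν y) : ν (x + y) = ν x := by
  apply le_antisymm
  · have h2 : min (ν (x + y)) (ν (-y)) ≤ ν x := by
      have := hν.min_le_add (x + y) (-y)
      simpa using this
    rw [val_neg hν h1] at h2
    rcases le_total (ν (x + y)) (ν y) with hle | hle
    · rwa [min_eq_left hle] at h2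
    · rw [min_eq_right hle] at h2
      exact absurd h2 (not_le.mpr h)
  · have := hν.min_le_add x y
    rwa [min_eq_left h.le] at this

theorem val_sum_eq {ν : K → Rbar} (hν : IsVal ν) (h1 : ν 1 = 0) {α : Type*} {s : Finset α}
    {f : α → K} {a : α} (ha : a ∈ s) (hfa : ν (f a) ≠ ⊤)
    (h : ∀ x ∈ s, x ≠ a → ν (f a) < ν (f x)) :
    ν (∑ x ∈ s, f x) = ν (f a) := by
  classical
  rw [← Finset.add_sum_erase s f ha]
  have hrest : ν (f a) < ν (∑ x ∈ s.erase a, f x) :=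
    sum_lt_val hν hfa fun x hx => h x (Finset.mem_of_mem_erase hx) (Finset.ne_of_mem_erase hx)
  exact val_add_eq_left hν h1 hrest

theorem dot_add {m : ℕ} (u u' : Fin m → ℤ) (v : Fin m → ℝ) :
    (∑ i, ((u + u') i : ℝ) * v i) = (∑ i, (u i : ℝ) * v i) + ∑ i, (u' i : ℝ) * v i := by
  rw [← Finset.sum_add_distrib]
  refine Finset.sum_congr rfl fun i _ => ?_
  have : ((u + u') i : ℝ) = (u i : ℝ) + (u' i : ℝ) := by push_cast [Pi.add_apply]; ring
  rw [this]; ring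

theorem mul_coeff {m : ℕ} (g F : Laur K m) (w : Fin m → ℤ) :
    (g * F).coeff w = ∑ x ∈ g.coeff.support ×ˢ F.coeff.support,
      if x.1 + x.2 = w then g.coeff x.1 * F.coeff x.2 else 0 := by
  classical
  rw [AddMonoidAlgebra.coeff_mul]
  rw [Finset.sum_product' g.coeff.support F.coeff.support fun a b => if a + b = w then g.coeff a * F.coeff b else 0]
  rfl

theorem tval_add_pair {m : ℕ} (ν : K → Rbar) (v : Fin m → ℝ) (g F : Laur K m)
    {x1 x2 w : Fin m → ℤ} (hx : x1 + x2 = w) :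
    tval ν v g x1 + tval ν v F x2
      = ν (g.coeff x1) + ν (F.coeff x2) + ((∑ i, (w i : ℝ) * v i : ℝ) : Rbar) := by
  subst hx
  unfold tval
  rw [dot_add, WithTop.coe_add, add_add_add_comm]


theorem mul_minTwice {m : ℕ} {ν : K → Rbar} (hν : IsVal ν) (v : Fin m → ℝ)
    {g F : Laur K m} (hg : g ≠ 0) (hF : MinTwice ν F v) :
    MinTwice ν (g * F) v := by
  classical
  rw [minTwice_iff] at hF ⊢
  obtain ⟨u0, hu0, u1, hu1, hne01, heq, hminF⟩ := hF
  have hAne : g.coeff.support.Nonempty := Finsupp.support_nonempty_iff.mpr (AddMonoidAlgebra.coeff_eq_zero.not.mpr hg)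
  rcases one_eq hν with h1 | h1
  · -- nondegenerate case
    set mg := g.coeff.support.inf' hAne (tval ν v g) with hmgdef
    set mF := tval ν v F u0 with hmFdef
    set A := g.coeff.support.filter (fun u => tval ν v g u = mg) with hAdef
    set B := F.coeff.support.filter (fun u => tval ν v F u = mF) with hBdef
    have hAsub : A ⊆ g.coeff.support := Finset.filter_subset _ _
    have hBsub : B ⊆ F.coeff.support := Finset.filter_subset _ _
    have hu0B : u0 ∈ B := Finset.mem_filter.mpr ⟨hu0, rfl⟩
    have hu1B : u1 ∈ B := Finset.mem_filter.mpr ⟨hu1, heq.symm⟩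
    have hAn : A.Nonempty := by
      obtain ⟨a, haA, hav⟩ := Finset.exists_mem_eq_inf' hAne (tval ν v g)
      exact ⟨a, Finset.mem_filter.mpr ⟨haA, hav.symm⟩⟩
    have hνne : ∀ {c : K}, c ≠ 0 → ν c ≠ ⊤ := fun hc => ne_top hν h1 hc
    have hgmin : ∀ u ∈ g.coeff.support, mg ≤ tval ν v g u := fun u hu => Finset.inf'_le _ hu
    have hAval : ∀ u ∈ A, tval ν v g u = mg := fun u hu => (Finset.mem_filter.mp hu).2
    have hBval : ∀ u ∈ B, tval ν v F u = mF := fun u hu => (Finset.mem_filter.mp hu).2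
    have htvalne : ∀ (h : Laur K m) (u : Fin m → ℤ), u ∈ h.coeff.support → tval ν v h u ≠ ⊤ := by
      intro h u hu
      unfold tval
      exact WithTop.add_ne_top.mpr ⟨hνne (Finsupp.mem_support_iff.mp hu), WithTop.coe_ne_top⟩
    have hmgne : mg ≠ ⊤ := by
      obtain ⟨a, haA⟩ := hAn
      rw [← hAval a haA]
      exact htvalne g a (hAsub haA)
    have hmFne : mF ≠ ⊤ := htvalne F u0 hu0
    have hcard : 1 < A.card * B.card := by
      have hB2 : 1 < B.card := Finset.one_lt_card.mpr ⟨u0, hu0B, u1, hu1B, hne01⟩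
      calc 1 < B.card := hB2
        _ ≤ A.card * B.card := Nat.le_mul_of_pos_left _ (Finset.card_pos.mpr hAn)
    obtain ⟨p, hp, q, hq, hpq, hup, huq⟩ := TwoUniqueSums.uniqueAdd_of_one_lt_card hcard
    -- lower bound
    have hlow : ∀ w', mg + mF ≤ tval ν v (g * F) w' := by
      intro w'
      set d : ℝ := ∑ i, (w' i : ℝ) * v i with hd
      have hterm : ∀ x ∈ g.coeff.support ×ˢ F.coeff.support,
          mg + mF + ((-d : ℝ) : Rbar)
            ≤ ν (if x.1 + x.2 = w' then g.coeff x.1 * F.coeff x.2 else 0) := by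
        intro x hx
        rcases Finset.mem_product.mp hx with ⟨hx1, hx2⟩
        split_ifs with hxe
        · have h1' := hgmin x.1 hx1
          have h2' := hminF x.2 hx2
          have hsum : mg + mF ≤ ν (g.coeff x.1) + ν (F.coeff x.2) + (d : Rbar) := by
            have := add_le_add h1' h2'
            rwa [tval_add_pair ν v g F hxe, ← hd] at this
          have h3 := add_le_add_left hsum ((-d : ℝ) : Rbar)
          rw [hν.map_mul]
          refine le_trans h3 (le_of_eq ?_)
          rw [add_assoc, ← WithTop.coe_add]
          norm_num
        · rw [hν.map_zero]; exact le_top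
      have hs := sum_le_val hν hterm
      rw [← mul_coeff] at hs
      have h2 := add_le_add_left hs ((d : ℝ) : Rbar)
      have h3 : mg + mF + ((-d : ℝ) : Rbar) + ((d : ℝ) : Rbar) = mg + mF := by
        rw [add_assoc, ← WithTop.coe_add]
        norm_num
      rw [h3] at h2
      exact h2
    -- key claim
    have key : ∀ a b, a ∈ A → b ∈ B → UniqueAdd A B a b →
        (g * F).coeff (a + b) ≠ 0 ∧ tval ν v (g * F) (a + b) = mg + mF := by
      intro a b haA hbB hu
      have hag : a ∈ g.coeff.support := hAsub haA
      have hbF : b ∈ F.coeff.support := hBsub hbB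
      have hxab : ((a, b) : (Fin m → ℤ) × (Fin m → ℤ)) ∈ g.coeff.support ×ˢ F.coeff.support :=
        Finset.mem_product.mpr ⟨hag, hbF⟩
      have hmain_ne : ν (g.coeff a * F.coeff b) ≠ ⊤ := by
        rw [hν.map_mul]
        exact WithTop.add_ne_top.mpr
          ⟨hνne (Finsupp.mem_support_iff.mp hag), hνne (Finsupp.mem_support_iff.mp hbF)⟩
      have hpairval : ν (g.coeff a) + ν (F.coeff b) + ((∑ i, ((a + b) i : ℝ) * v i : ℝ) : Rbar)
          = mg + mF := by
        rw [← tval_add_pair ν v g F rfl, hAval a haA, hBval b hbB]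
      have hdom : ∀ x ∈ g.coeff.support ×ˢ F.coeff.support, x ≠ (a, b) →
          ν (g.coeff a * F.coeff b) < ν (if x.1 + x.2 = a + b then g.coeff x.1 * F.coeff x.2 else 0) := by
        intro x hx hxne
        rcases Finset.mem_product.mp hx with ⟨hx1, hx2⟩
        split_ifs with hxe
        · have hnotboth : x.1 ∉ A ∨ x.2 ∉ B := by
            by_contra hc
            push_neg at hc
            obtain ⟨e1, e2⟩ := hu hc.1 hc.2 hxe
            exact hxne (Prod.ext e1 e2)
          have hgt : mg + mF < tval ν v g x.1 + tval ν v F x.2 := by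
            rcases hnotboth with hna | hnb
            · have hs : mg < tval ν v g x.1 :=
                lt_of_le_of_ne (hgmin _ hx1)
                  (fun he => hna (Finset.mem_filter.mpr ⟨hx1, he.symm⟩))
              calc mg + mF < tval ν v g x.1 + mF :=
                    (WithTop.add_lt_add_iff_right hmFne).mpr hs
                _ ≤ tval ν v g x.1 + tval ν v F x.2 := add_le_add_right (hminF _ hx2) _
            · have hs : mF < tval ν v F x.2 :=
                lt_of_le_of_ne (hminF _ hx2)
                  (fun he => hnb (Finset.mem_filter.mpr ⟨hx2, he.symm⟩))
              calc mg + mF < mg + tval ν v F x.2 :=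
                    (WithTop.add_lt_add_iff_left hmgne).mpr hs
                _ ≤ tval ν v g x.1 + tval ν v F x.2 := add_le_add_left (hgmin _ hx1) _
          rw [tval_add_pair ν v g F hxe, ← hpairval] at hgt
          have := (WithTop.add_lt_add_iff_right (WithTop.coe_ne_top
            (a := (∑ i, ((a + b) i : ℝ) * v i : ℝ)))).mp hgt
          rwa [← hν.map_mul, ← hν.map_mul] at this
        · rw [hν.map_zero]
          exact lt_top_iff_ne_top.mpr hmain_ne
      have hcoeffν : ν ((g * F).coeff (a + b)) = ν (g.coeff a * F.coeff b) := by
        rw [mul_coeff]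
        have h0 : (if ((a, b) : (Fin m → ℤ) × (Fin m → ℤ)).1 + ((a, b) : (Fin m → ℤ) × (Fin m → ℤ)).2 = a + b
            then g.coeff ((a, b) : (Fin m → ℤ) × (Fin m → ℤ)).1 * F.coeff ((a, b) : (Fin m → ℤ) × (Fin m → ℤ)).2 else 0)
            = g.coeff a * F.coeff b := if_pos rfl
        rw [val_sum_eq hν h1 hxab (by rw [h0]; exact hmain_ne)
          (fun x hx hxne => by rw [h0]; exact hdom x hx hxne), h0]
      constructor
      · intro hc
        rw [hc, hν.map_zero] at hcoeffν
        exact hmain_ne hcoeffν.symm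
      · unfold tval
        rw [hcoeffν, hν.map_mul, hpairval]
    rcases Finset.mem_product.mp hp with ⟨hp1, hp2⟩
    rcases Finset.mem_product.mp hq with ⟨hq1, hq2⟩
    obtain ⟨hp0, hpv⟩ := key p.1 p.2 hp1 hp2 hup
    obtain ⟨hq0, hqv⟩ := key q.1 q.2 hq1 hq2 huq
    refine ⟨p.1 + p.2, Finsupp.mem_support_iff.mpr hp0,
      q.1 + q.2, Finsupp.mem_support_iff.mpr hq0, ?_, by rw [hpv, hqv],
      fun w hw => by rw [hpv]; exact hlow w⟩
    intro hEq
    apply hpq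
    obtain ⟨e1, e2⟩ := hup hq1 hq2 hEq.symm
    exact (Prod.ext e1 e2).symm
  · -- degenerate case : ν is identically ⊤
    have hall := all_top hν h1
    have hcard : 1 < g.coeff.support.card * F.coeff.support.card := by
      have hB2 : 1 < F.coeff.support.card := Finset.one_lt_card.mpr ⟨u0, hu0, u1, hu1, hne01⟩
      calc 1 < F.coeff.support.card := hB2
        _ ≤ g.coeff.support.card * F.coeff.support.card :=
            Nat.le_mul_of_pos_left _ (Finset.card_pos.mpr hAne)
    obtain ⟨p, hp, q, hq, hpq, hup, huq⟩ := TwoUniqueSums.uniqueAdd_of_one_lt_card hcard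
    rcases Finset.mem_product.mp hp with ⟨hp1, hp2⟩
    rcases Finset.mem_product.mp hq with ⟨hq1, hq2⟩
    have hp0 : (g * F).coeff (p.1 + p.2) ≠ 0 := by
      rw [AddMonoidAlgebra.coeff_mul_add_of_uniqueAdd hup]
      exact mul_ne_zero (Finsupp.mem_support_iff.mp hp1) (Finsupp.mem_support_iff.mp hp2)
    have hq0 : (g * F).coeff (q.1 + q.2) ≠ 0 := by
      rw [AddMonoidAlgebra.coeff_mul_add_of_uniqueAdd huq]
      exact mul_ne_zero (Finsupp.mem_support_iff.mp hq1) (Finsupp.mem_support_iff.mp hq2)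
    refine ⟨p.1 + p.2, Finsupp.mem_support_iff.mpr hp0,
      q.1 + q.2, Finsupp.mem_support_iff.mpr hq0, ?_, ?_, ?_⟩
    · intro hEq
      apply hpq
      obtain ⟨e1, e2⟩ := hup hq1 hq2 hEq.symm
      exact (Prod.ext e1 e2).symm
    · unfold tval; rw [hall, hall, top_add, top_add]
    · intro w hw; unfold tval; rw [hall, hall, top_add, top_add]

end Stmt13Aux

theorem laurExt_apply' {k K : Type} [Field k] [Field K] [Algebra k K] (m : ℕ)
    (f : Laur k m) (u : Fin m → ℤ) :
    (laurExt k K m f).coeff u = algebraMap k K (f.coeff u) := by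
  classical
  unfold laurExt
  rw [AddMonoidAlgebra.lift_apply, AddMonoidAlgebra.coeff_finsuppSum, Finsupp.sum_apply]
  have hs : ∀ (b : k) (a : Fin m → ℤ),
      b • (AddMonoidAlgebra.single a (1:K)) = AddMonoidAlgebra.single a (algebraMap k K b) := by
    intro b a
    rw [Algebra.algebraMap_eq_smul_one]
    exact AddMonoidAlgebra.smul_single b a 1
  simp only [AddMonoidAlgebra.of_apply, toAdd_ofAdd, hs, AddMonoidAlgebra.coeff_single, Finsupp.single_apply]
  rw [Finsupp.sum_ite_eq' f.coeff u (fun _ b => algebraMap k K b)]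
  split_ifs with h
  · rfl
  · rw [Finsupp.notMem_support_iff.mp h, map_zero]

/-- Lemma A.2, hypersurface case.  Let `k ⊆ K` be algebraically
closed fields with valuations `ν_k` on `k` and `ν` on `K` extending `ν_k` (possibly
trivial, no completeness assumed).  For every nonzero Laurent polynomial `f` over `k`,
the tropicalization of the hypersurface it defines over `k` is contained in the
tropicalization of the hypersurface it defines over `K`. -/
theorem stmt13 {k K : Type} [Field k] [Field K] [IsAlgClosed k] [IsAlgClosed K]
    [Algebra k K]
    (νk : k → Rbar) (ν : K → Rbar) (hνk : IsVal νk) (hν : IsVal ν)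
    (hext : ∀ a : k, ν (algebraMap k K a) = νk a)
    (m : ℕ) (f : Laur k m) (hf : f ≠ 0) :
    Ttrop νk (Ideal.span {f}) ⊆ Ttrop ν (Ideal.span {laurExt k K m f}) := by
  classical
  intro v hv h hmem hhne
  have hcoef : ∀ u, (laurExt k K m f).coeff u = algebraMap k K (f.coeff u) := laurExt_apply' m f
  have hsupp : (laurExt k K m f).coeff.support = f.coeff.support := by
    ext u
    simp only [Finsupp.mem_support_iff, hcoef]
    exact not_congr (map_eq_zero_iff (algebraMap k K) (algebraMap k K).injective)
  have hfmin : MinTwice νk f v := hv f (Ideal.subset_span rfl) hf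
  have hFmin : MinTwice ν (laurExt k K m f) v := by
    obtain ⟨u, hu, u', hu', hne, heq2, hle⟩ := hfmin
    refine ⟨u, ?_, u', ?_, hne, ?_, ?_⟩
    · rw [hsupp]; exact hu
    · rw [hsupp]; exact hu'
    · rw [hcoef u, hcoef u', hext, hext]; exact heq2
    · intro w hw
      rw [hcoef u, hcoef w, hext, hext]
      exact hle w (by rwa [hsupp] at hw)
  obtain ⟨c, hc⟩ := Ideal.mem_span_singleton.mp hmem
  have hcne : c ≠ 0 := by
    rintro rfl
    rw [mul_zero] at hc
    exact hhne hc
  have hmul := Stmt13Aux.mul_minTwice hν v hcne hFmin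
  rwa [mul_comm c (laurExt k K m f), ← hc] at hmul

end
end

section
/- Let K be an algebraically closed field with a nontrivial valuation ν (not necessarily complete), and let f = Σ_u a_u x^u be a nonzero Laurent polynomial in K[x_1^{±1}, ..., x_m^{±1}]. Define Ψ_f : ℝ^m → ℝ by Ψ_f(v) = min{⟨u, v⟩ + ν(a_u) : u ∈ supp(f)}. Then the closure in ℝ^m of {(ν(y_1), ..., ν(y_m)) : y ∈ (K*)^m, f(y) = 0} is contained in the corner locus of Ψ_f, i.e. in the set of v ∈ ℝ^m at which the minimum defining Ψ_f(v) is attained by at least two distinct u ∈ supp(f). -/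
open scoped BigOperators Classical

noncomputable section

section Aux

variable {K : Type} [Field K] {ν : K → Rbar}

lemma nu_sum_ge (hν : IsVal ν) {ι : Type} (s : Finset ι) (t : ι → K) (c : Rbar)
    (h : ∀ i ∈ s, c ≤ ν (t i)) : c ≤ ν (∑ i ∈ s, t i) := by
  classical
  induction s using Finset.induction_on with
  | empty => simp [hν.map_zero]
  | @insert a s hnotmem ih =>
      rw [Finset.sum_insert hnotmem]
      refine le_trans (le_min (h _ (Finset.mem_insert_self _ _))
        (ih fun i hi => h i (Finset.mem_insert_of_mem hi))) (hν.min_le_add _ _)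

lemma nu_one (hν : IsVal ν) (h1 : ν 1 ≠ ⊤) : ν 1 = 0 := by
  obtain ⟨r, hr⟩ := WithTop.ne_top_iff_exists.mp h1
  have h := hν.map_mul 1 1
  rw [mul_one, ← hr, ← WithTop.coe_add] at h
  have : r = r + r := WithTop.coe_injective h
  have hr0 : r = 0 := by linarith
  rw [← hr, hr0]; rfl

lemma nu_ne_top (hν : IsVal ν) (h0 : ν 1 = 0) {a : K} (ha : a ≠ 0) : ν a ≠ ⊤ := by
  intro h
  have := hν.map_mul a a⁻¹
  rw [mul_inv_cancel₀ ha, h0, h, top_add] at this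
  exact (WithTop.coe_ne_top (α := ℝ) (a := 0)) (by exact_mod_cast this)

lemma nu_coe (hν : IsVal ν) (h0 : ν 1 = 0) {a : K} (ha : a ≠ 0) :
    ν a = ((vR ν a : ℝ) : Rbar) := by
  obtain ⟨r, hr⟩ := WithTop.ne_top_iff_exists.mp (nu_ne_top hν h0 ha)
  rw [← hr]
  simp [vR, ← hr]

lemma nu_neg (hν : IsVal ν) (h0 : ν 1 = 0) (a : K) : ν (-a) = ν a := by
  have hm1 : (-1 : K) ≠ 0 := by norm_num
  obtain ⟨s, hs⟩ := WithTop.ne_top_iff_exists.mp (nu_ne_top hν h0 hm1)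
  have h := hν.map_mul (-1) (-1)
  rw [neg_mul_neg, one_mul, h0, ← hs, ← WithTop.coe_add] at h
  have : (0 : ℝ) = s + s := WithTop.coe_injective (by exact_mod_cast h)
  have hs0 : s = 0 := by linarith
  have : ν (-a) = ν (-1) + ν a := by rw [← hν.map_mul]; ring_nf
  rw [this, ← hs, hs0]
  simp

lemma nu_add_eq (hν : IsVal ν) (h0 : ν 1 = 0) {a b : K} (h : ν a < ν b) :
    ν (a + b) = ν a := by
  refine le_antisymm ?_ (by simpa [min_eq_left h.le] using hν.min_le_add a b)
  by_contra hc
  push_neg at hc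
  have h2 : min (ν (a + b)) (ν (-b)) ≤ ν a := by
    have := hν.min_le_add (a + b) (-b)
    simpa using this
  rw [nu_neg hν h0] at h2
  exact absurd h2 (not_le.mpr (lt_min hc h))

lemma nu_sum_eq (hν : IsVal ν) (h0 : ν 1 = 0) {ι : Type} (s : Finset ι) (t : ι → K)
    (u0 : ι) (hu0 : u0 ∈ s) (hstrict : ∀ i ∈ s, i ≠ u0 → ν (t u0) < ν (t i)) :
    ν (∑ i ∈ s, t i) = ν (t u0) := by
  classical
  rw [← Finset.add_sum_erase s t hu0]
  rcases Finset.eq_empty_or_nonempty (s.erase u0) with he | he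
  · rw [he]; simp
  · refine nu_add_eq hν h0 ?_
    have hlt : ν (t u0) < (s.erase u0).inf' he fun i => ν (t i) := by
      rw [Finset.lt_inf'_iff]
      intro i hi
      exact hstrict i (Finset.mem_of_mem_erase hi) (Finset.ne_of_mem_erase hi)
    exact lt_of_lt_of_le hlt (nu_sum_ge hν _ _ _ fun i hi => Finset.inf'_le _ hi)

lemma nu_zpow (hν : IsVal ν) (h0 : ν 1 = 0) {a : K} (ha : a ≠ 0) (n : ℤ) :
    ν (a ^ n) = (((n : ℝ) * vR ν a : ℝ) : Rbar) := by
  have hcoe := nu_coe hν h0 ha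
  have hinv : ν a⁻¹ = ((-(vR ν a) : ℝ) : Rbar) := by
    have h := hν.map_mul a a⁻¹
    rw [mul_inv_cancel₀ ha, h0, hcoe] at h
    obtain ⟨s, hs⟩ := WithTop.ne_top_iff_exists.mp (nu_ne_top hν h0 (inv_ne_zero ha))
    rw [← hs] at h ⊢
    rw [← WithTop.coe_add] at h
    have : (0 : ℝ) = vR ν a + s := WithTop.coe_injective (by exact_mod_cast h)
    have hsv : s = -(vR ν a) := by linarith
    rw [hsv]
  induction n using Int.induction_on with
  | zero => simpa using h0
  | succ k ih =>
      rw [zpow_add_one₀ ha, hν.map_mul, ih, hcoe, ← WithTop.coe_add]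
      congr 1
      push_cast
      ring
  | pred k ih =>
      rw [zpow_sub_one₀ ha, hν.map_mul, ih, hinv, ← WithTop.coe_add]
      congr 1
      push_cast
      ring

lemma nu_prod (hν : IsVal ν) (h0 : ν 1 = 0) {ι : Type} (s : Finset ι) (t : ι → K)
    (r : ι → ℝ) (h : ∀ i ∈ s, ν (t i) = ((r i : ℝ) : Rbar)) :
    ν (∏ i ∈ s, t i) = ((∑ i ∈ s, r i : ℝ) : Rbar) := by
  classical
  induction s using Finset.induction_on with
  | empty => simpa using h0
  | @insert a s hnotmem ih =>
      rw [Finset.prod_insert hnotmem, Finset.sum_insert hnotmem, hν.map_mul,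
        h a (Finset.mem_insert_self _ _), ih fun i hi => h i (Finset.mem_insert_of_mem hi),
        ← WithTop.coe_add]

end Aux

/-- easy half of Kapranov's theorem.  Let `K` be algebraically closed
with a nontrivial valuation `ν` (not necessarily complete), and let `f` be a nonzero
Laurent polynomial.  Then the closure in `ℝ^m` of the coordinatewise valuations of the
zeros of `f` in `(K*)^m` is contained in the corner locus of
`Ψ_f(v) = min {⟨u, v⟩ + ν(a_u) : u ∈ supp f}`, i.e. in the set of `v` at which the
minimum is attained by at least two distinct `u ∈ supp f`. -/
theorem stmt14 {K : Type} [Field K] [IsAlgClosed K]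
    (ν : K → Rbar) (hν : IsVal ν) (hnt : IsNontrivialVal ν)
    (m : ℕ) (f : Laur K m) (hf : f ≠ 0) :
    closure {v : Fin m → ℝ | ∃ y : Fin m → Kˣ,
        lEval (fun i => ((y i : Kˣ) : K)) f = 0 ∧ v = fun i => vR ν ((y i : Kˣ) : K)}
      ⊆ {v : Fin m → ℝ | MinTwice ν f v} := by
  classical
  by_cases h1 : ν 1 = ⊤
  · -- degenerate case: ν ≡ ⊤
    have hall : ∀ a : K, ν a = ⊤ := fun a => by
      rw [← mul_one a, hν.map_mul, h1, add_top]
    by_cases h2 : ∃ u ∈ f.coeff.support, ∃ u' ∈ f.coeff.support, u ≠ u'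
    · intro v _
      obtain ⟨u, hu, u', hu', hne⟩ := h2
      exact ⟨u, hu, u', hu', hne, by simp [hall], fun w hw => by simp [hall]⟩
    · -- support is a singleton; the base set is empty
      push_neg at h2
      obtain ⟨u0, hu0⟩ := (Finsupp.support_nonempty_iff (f := f.coeff)).mpr (by simpa using hf)
      have hsupp : f.coeff.support = {u0} := by
        apply Finset.eq_singleton_iff_unique_mem.mpr
        exact ⟨hu0, fun u hu => h2 u hu u0 hu0⟩
      have : {v : Fin m → ℝ | ∃ y : Fin m → Kˣ,
          lEval (fun i => ((y i : Kˣ) : K)) f = 0 ∧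
            v = fun i => vR ν ((y i : Kˣ) : K)} = ∅ := by
        ext v
        simp only [Set.mem_setOf_eq, Set.mem_empty_iff_false, iff_false, not_exists]
        rintro y ⟨hy, -⟩
        rw [lEval, hsupp, Finset.sum_singleton] at hy
        refine mul_ne_zero (Finsupp.mem_support_iff.mp hu0) ?_ hy
        exact Finset.prod_ne_zero_iff.mpr fun i _ => zpow_ne_zero _ (Units.ne_zero (y i))
      rw [this, closure_empty]
      exact Set.empty_subset _
  · -- main case
    have h0 : ν 1 = 0 := nu_one hν h1
    set r : (Fin m → ℤ) → ℝ := fun u => vR ν (f.coeff u) with hr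
    set R : (Fin m → ℤ) → (Fin m → ℝ) → ℝ :=
      fun u v => r u + ∑ i, (u i : ℝ) * v i with hR
    have hfu : ∀ u ∈ f.coeff.support, ν (f.coeff u) = ((r u : ℝ) : Rbar) := fun u hu =>
      nu_coe hν h0 (Finsupp.mem_support_iff.mp hu)
    -- key valuation computation
    have key : ∀ (y : Fin m → Kˣ) (u : Fin m → ℤ), u ∈ f.coeff.support →
        ν (f.coeff u * ∏ i, ((y i : K)) ^ (u i)) =
          ((R u (fun i => vR ν ((y i : K))) : ℝ) : Rbar) := by
      intro y u hu
      rw [hν.map_mul, hfu u hu,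
        nu_prod hν h0 Finset.univ (fun i => ((y i : K)) ^ (u i))
          (fun i => (u i : ℝ) * vR ν ((y i : K)))
          (fun i _ => nu_zpow hν h0 (Units.ne_zero (y i)) (u i)),
        ← WithTop.coe_add]
    -- the real-valued corner locus
    set T : Set (Fin m → ℝ) := {v | ∃ u ∈ f.coeff.support, ∃ u' ∈ f.coeff.support, u ≠ u' ∧
      R u v = R u' v ∧ ∀ w ∈ f.coeff.support, R u v ≤ R w v} with hT
    have hRcont : ∀ u : Fin m → ℤ, Continuous (R u) := fun u =>
      continuous_const.add (continuous_finset_sum _ fun i _ =>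
        continuous_const.mul (continuous_apply i))
    -- T is closed
    have hTclosed : IsClosed T := by
      have : T = ⋃ p ∈ (f.coeff.support ×ˢ f.coeff.support).filter (fun p => p.1 ≠ p.2),
          ({v | R p.1 v = R p.2 v} ∩ ⋂ w ∈ f.coeff.support, {v | R p.1 v ≤ R w v}) := by
        ext v
        simp only [hT, Set.mem_setOf_eq, Set.mem_iUnion, Finset.mem_filter,
          Finset.mem_product, Set.mem_inter_iff, Set.mem_iInter]
        constructor
        · rintro ⟨u, hu, u', hu', hne, heq, hmin⟩
          exact ⟨(u, u'), ⟨⟨hu, hu'⟩, hne⟩, heq, hmin⟩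
        · rintro ⟨⟨u, u'⟩, ⟨⟨hu, hu'⟩, hne⟩, heq, hmin⟩
          exact ⟨u, hu, u', hu', hne, heq, hmin⟩
      rw [this]
      refine Set.Finite.isClosed_biUnion (Finset.finite_toSet _) fun p _ => ?_
      exact (isClosed_eq (hRcont _) (hRcont _)).inter
        (isClosed_biInter fun w _ => isClosed_le (hRcont _) (hRcont _))
    -- the base set is contained in T
    have hbase : {v : Fin m → ℝ | ∃ y : Fin m → Kˣ,
        lEval (fun i => ((y i : Kˣ) : K)) f = 0 ∧
          v = fun i => vR ν ((y i : Kˣ) : K)} ⊆ T := by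
      rintro v ⟨y, hy, rfl⟩
      set w : Fin m → ℝ := fun i => vR ν ((y i : K)) with hw
      set t : (Fin m → ℤ) → K := fun u => f.coeff u * ∏ i, ((y i : K)) ^ (u i) with ht
      have hsupp : f.coeff.support.Nonempty := Finsupp.support_nonempty_iff.mpr (by simpa using hf)
      obtain ⟨u0, hu0, hmin⟩ := Finset.exists_min_image f.coeff.support (fun u => R u w) hsupp
      have htne : ∀ u ∈ f.coeff.support, t u ≠ 0 := fun u hu =>
        mul_ne_zero (Finsupp.mem_support_iff.mp hu)
          (Finset.prod_ne_zero_iff.mpr fun i _ => zpow_ne_zero _ (Units.ne_zero (y i)))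
      have hkey : ∀ u ∈ f.coeff.support, ν (t u) = ((R u w : ℝ) : Rbar) := fun u hu =>
        key y u hu
      -- find a second minimizer
      by_contra hnot
      have hstrict : ∀ u ∈ f.coeff.support, u ≠ u0 → ν (t u0) < ν (t u) := by
        intro u hu hne
        rw [hkey u hu, hkey u0 hu0, WithTop.coe_lt_coe]
        refine lt_of_le_of_ne (hmin u hu) ?_
        intro heq
        exact hnot ⟨u0, hu0, u, hu, fun h => hne h.symm, heq, hmin⟩
      have hzero : ∑ u ∈ f.coeff.support, t u = 0 := hy
      have := nu_sum_eq hν h0 f.coeff.support t u0 hu0 hstrict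
      rw [hzero, hν.map_zero, hkey u0 hu0] at this
      exact WithTop.coe_ne_top this.symm
    -- T is contained in the corner locus
    have hTsub : T ⊆ {v : Fin m → ℝ | MinTwice ν f v} := by
      rintro v ⟨u, hu, u', hu', hne, heq, hmin⟩
      refine ⟨u, hu, u', hu', hne, ?_, ?_⟩
      · rw [hfu u hu, hfu u' hu', ← WithTop.coe_add, ← WithTop.coe_add]
        exact_mod_cast heq
      · intro w hw
        rw [hfu u hu, hfu w hw, ← WithTop.coe_add, ← WithTop.coe_add,
          WithTop.coe_le_coe]
        exact hmin w hw
    exact (closure_minimal hbase hTclosed).trans hTsub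

end
end
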